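/- Let F_0 = C ⊇ F_1 ⊇ ... ⊇ F_{n-k} be the sequence of facility sets produced by the reverse greedy algorithm for k-center (each step removes the facility minimizing the resulting cost, |F_{n-k}| = k). Then cost(F_{n-k}) ≤ 2k·OPT, i.e., reverse greedy is a 2k-approximation for k-center. -/
import Mathlib

open Finset

/-- The k-center cost of a facility set `F`: the maximum over clients of the
distance to the nearest facility (junk value 0 for empty `F`). -/
noncomputable def cost {C : Type*} [MetricSpace C] [Fintype C] [Nonempty C]
    (F : Finset C) : ℝ :=
  if h : F.Nonempty then
    Finset.univ.sup' Finset.univ_nonempty (fun c => F.inf' h (fun f => dist c f))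
  else 0

lemma cost_le_of_forall {C : Type*} [MetricSpace C] [Fintype C] [Nonempty C]
    {F : Finset C} (hF : F.Nonempty) {B : ℝ}
    (h : ∀ c : C, ∃ f ∈ F, dist c f ≤ B) : cost F ≤ B := by
  rw [cost, dif_pos hF]
  refine Finset.sup'_le _ _ fun c _ => ?_
  obtain ⟨f, hf, hfB⟩ := h c
  exact le_trans (Finset.inf'_le _ hf) hfB

lemma exists_dist_le_cost {C : Type*} [MetricSpace C] [Fintype C] [Nonempty C]
    {F : Finset C} (hF : F.Nonempty) (c : C) :
    ∃ f ∈ F, dist c f ≤ cost F := by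
  obtain ⟨f, hf, heq⟩ := Finset.exists_mem_eq_inf' hF (fun f => dist c f)
  refine ⟨f, hf, ?_⟩
  have h1 : dist c f = F.inf' hF (fun f => dist c f) := heq.symm
  rw [cost, dif_pos hF, h1]
  exact Finset.le_sup' (fun c => F.inf' hF (fun f => dist c f)) (Finset.mem_univ c)

lemma cost_nonneg {C : Type*} [MetricSpace C] [Fintype C] [Nonempty C]
    (F : Finset C) : 0 ≤ cost F := by
  rw [cost]
  split_ifs with h
  · have c := Classical.arbitrary C
    refine le_trans ?_ (Finset.le_sup' _ (Finset.mem_univ c))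
    exact Finset.le_inf' h _ fun f _ => dist_nonneg
  · exact le_refl 0

open Classical in
/-- Centers in `Opt` whose radius-`r` ball still contains a facility of `F`. -/
noncomputable def aliveSet {C : Type*} [MetricSpace C]
    (Opt : Finset C) (r : ℝ) (F : Finset C) : Finset C :=
  Opt.filter (fun o => ∃ h ∈ F, dist o h ≤ r)

lemma mem_aliveSet {C : Type*} [MetricSpace C]
    {Opt : Finset C} {r : ℝ} {F : Finset C} {o : C} :
    o ∈ aliveSet Opt r F ↔ o ∈ Opt ∧ ∃ h ∈ F, dist o h ≤ r := by
  classical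
  simp [aliveSet]

/-- Reverse greedy is a `2k`-approximation for k-center: any execution
(starting from all of `C`, repeatedly removing a facility whose removal
increases the cost the least, for `n − k` steps) ends with cost at most
`2k·OPT`. -/
theorem stmt10 {C : Type*} [MetricSpace C] [Fintype C] [Nonempty C] [DecidableEq C]
    (k : ℕ) (hk : 1 ≤ k) (hkn : k ≤ Fintype.card C)
    (OPT : ℝ)
    (hOPT : IsLeast {x : ℝ | ∃ F : Finset C, F.card = k ∧ cost F = x} OPT)
    (Fs : ℕ → Finset C) (h0 : Fs 0 = Finset.univ)
    (hstep : ∀ i < Fintype.card C - k, ∃ f ∈ Fs i,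
      Fs (i + 1) = (Fs i).erase f ∧
      ∀ g ∈ Fs i, cost ((Fs i).erase f) ≤ cost ((Fs i).erase g)) :
    cost (Fs (Fintype.card C - k)) ≤ 2 * k * OPT := by
  classical
  obtain ⟨⟨Opt, hOptcard, hOptcost⟩, -⟩ := hOPT
  set n := Fintype.card C with hn
  have hOptne : Opt.Nonempty := Finset.card_pos.mp (by rw [hOptcard]; omega)
  have hOPT0 : 0 ≤ OPT := hOptcost ▸ cost_nonneg Opt
  have hcover : ∀ y : C, ∃ o ∈ Opt, dist y o ≤ OPT := by
    intro y
    obtain ⟨o, ho, hd⟩ := exists_dist_le_cost hOptne y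
    exact ⟨o, ho, by rwa [hOptcost] at hd⟩
  -- cardinalities along the run
  have hcards : ∀ t, t ≤ n - k → (Fs t).card = n - t := by
    intro t
    induction t with
    | zero => intro _; rw [h0]; simp [hn]
    | succ t ih =>
      intro ht
      have htlt : t < n - k := by omega
      obtain ⟨f, hfF, hFs, -⟩ := hstep t htlt
      rw [hFs, Finset.card_erase_of_mem hfF, ih (by omega)]
      omega
  have hne : ∀ t, t ≤ n - k → (Fs t).Nonempty := by
    intro t ht
    refine Finset.card_pos.mp ?_
    rw [hcards t ht]; omega
  have hmk : ∀ F : Finset C, (aliveSet Opt OPT F).card ≤ k := by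
    intro F
    calc (aliveSet Opt OPT F).card ≤ Opt.card :=
          Finset.card_le_card (Finset.filter_subset _ _)
      _ = k := hOptcard
  -- the key invariant
  have key : ∀ t, t ≤ n - k → ∀ y : C, ∃ o ∈ aliveSet Opt OPT (Fs t),
      dist y o ≤ 2 * OPT * k - 2 * OPT * ((aliveSet Opt OPT (Fs t)).card : ℝ) + OPT := by
    intro t
    induction t with
    | zero =>
      intro _ y
      obtain ⟨o, ho, hd⟩ := hcover y
      have hoalive : o ∈ aliveSet Opt OPT (Fs 0) := by
        rw [mem_aliveSet]
        exact ⟨ho, o, by rw [h0]; exact Finset.mem_univ o, by simpa [dist_self] using hOPT0⟩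
      refine ⟨o, hoalive, ?_⟩
      have hc : ((aliveSet Opt OPT (Fs 0)).card : ℝ) ≤ (k : ℝ) := by
        exact_mod_cast hmk (Fs 0)
      nlinarith
    | succ t ih =>
      intro ht
      have htlt : t < n - k := by omega
      have ht' : t ≤ n - k := by omega
      obtain ⟨f, hfF, hFs, hmin⟩ := hstep t htlt
      have hsub : Fs (t+1) ⊆ Fs t := by rw [hFs]; exact Finset.erase_subset _ _
      have haliveMono : aliveSet Opt OPT (Fs (t+1)) ⊆ aliveSet Opt OPT (Fs t) := by
        intro o ho
        rw [mem_aliveSet] at ho ⊢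
        obtain ⟨hoOpt, h, hhF, hhd⟩ := ho
        exact ⟨hoOpt, h, hsub hhF, hhd⟩
      by_cases hcase : aliveSet Opt OPT (Fs t) ⊆ aliveSet Opt OPT (Fs (t+1))
      · -- no ball dies: the invariant transfers verbatim
        have hEq : aliveSet Opt OPT (Fs (t+1)) = aliveSet Opt OPT (Fs t) :=
          Finset.Subset.antisymm haliveMono hcase
        intro y
        obtain ⟨o, ho, hd⟩ := ih ht' y
        refine ⟨o, ?_, ?_⟩
        · rw [hEq]; exact ho
        · rw [hEq]; exact hd
      · -- a ball dies
        have hssub : aliveSet Opt OPT (Fs (t+1)) ⊂ aliveSet Opt OPT (Fs t) :=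
          Finset.ssubset_iff_subset_ne.mpr ⟨haliveMono, fun he => hcase (le_of_eq he.symm)⟩
        have hmlt : (aliveSet Opt OPT (Fs (t+1))).card < (aliveSet Opt OPT (Fs t)).card :=
          Finset.card_lt_card hssub
        -- representative choice
        have hrep : ∀ o ∈ aliveSet Opt OPT (Fs t), ∃ x ∈ Fs t, dist o x ≤ OPT :=
          fun o ho => (mem_aliveSet.mp ho).2
        set ρ : C → C := fun o =>
          if h : ∃ x ∈ Fs t, dist o x ≤ OPT then h.choose else o with hρ
      -- facts about ρ
        have hρmem : ∀ o ∈ aliveSet Opt OPT (Fs t), ρ o ∈ Fs t ∧ dist o (ρ o) ≤ OPT := by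
          intro o ho
          have hex : ∃ x ∈ Fs t, dist o x ≤ OPT := hrep o ho
          have : ρ o = hex.choose := by rw [hρ]; simp only [dif_pos hex]
          rw [this]
          exact ⟨hex.choose_spec.1, hex.choose_spec.2⟩
        have hnotsub : ¬ Fs t ⊆ (aliveSet Opt OPT (Fs t)).image ρ := by
          intro hFR
          have h1 := Finset.card_le_card hFR
          have h2 : ((aliveSet Opt OPT (Fs t)).image ρ).card ≤ (aliveSet Opt OPT (Fs t)).card :=
            Finset.card_image_le
          have h3 := hmk (Fs t)
          have h4 : (Fs t).card = n - t := hcards t ht'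
          omega
        obtain ⟨g, hgF, hgR⟩ := Finset.not_subset.mp hnotsub
        -- bound the cost of the alternative removal
        have hBne : (Fs t).erase g |>.Nonempty := by
          refine Finset.card_pos.mp ?_
          rw [Finset.card_erase_of_mem hgF, hcards t ht']
          omega
        have hcostg : cost ((Fs t).erase g) ≤
            2 * OPT * k - 2 * OPT * ((aliveSet Opt OPT (Fs t)).card : ℝ) + 2 * OPT := by
          apply cost_le_of_forall hBne
          intro y
          obtain ⟨o, ho, hd⟩ := ih ht' y
          obtain ⟨hρF, hρd⟩ := hρmem o ho
          have hρne : ρ o ≠ g := by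
            intro he
            exact hgR (he ▸ Finset.mem_image_of_mem ρ ho)
          refine ⟨ρ o, Finset.mem_erase.mpr ⟨hρne, hρF⟩, ?_⟩
          calc dist y (ρ o) ≤ dist y o + dist o (ρ o) := dist_triangle _ _ _
            _ ≤ (2 * OPT * k - 2 * OPT * ((aliveSet Opt OPT (Fs t)).card : ℝ) + OPT) + OPT :=
              add_le_add hd hρd
            _ = 2 * OPT * k - 2 * OPT * ((aliveSet Opt OPT (Fs t)).card : ℝ) + 2 * OPT := by ring
        have hcostF' : cost (Fs (t+1)) ≤
            2 * OPT * k - 2 * OPT * ((aliveSet Opt OPT (Fs t)).card : ℝ) + 2 * OPT := by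
          rw [hFs]
          exact le_trans (hmin g hgF) hcostg
        -- rebuild the invariant
        intro y
        have hF'ne : (Fs (t+1)).Nonempty := hne (t+1) ht
        obtain ⟨h, hhF', hhd⟩ := exists_dist_le_cost hF'ne y
        obtain ⟨o, hoOpt, hod⟩ := hcover h
        have hoalive : o ∈ aliveSet Opt OPT (Fs (t+1)) := by
          rw [mem_aliveSet]
          exact ⟨hoOpt, h, hhF', by rw [dist_comm]; exact hod⟩
        refine ⟨o, hoalive, ?_⟩
        have hm' : ((aliveSet Opt OPT (Fs (t+1))).card : ℝ) + 1 ≤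
            ((aliveSet Opt OPT (Fs t)).card : ℝ) := by exact_mod_cast hmlt
        calc dist y o ≤ dist y h + dist h o := dist_triangle _ _ _
          _ ≤ (2 * OPT * k - 2 * OPT * ((aliveSet Opt OPT (Fs t)).card : ℝ) + 2 * OPT) + OPT :=
            add_le_add (le_trans hhd hcostF') hod
          _ ≤ 2 * OPT * k - 2 * OPT * ((aliveSet Opt OPT (Fs (t+1))).card : ℝ) + OPT := by
            nlinarith
  -- conclude
  have hEndne : (Fs (n-k)).Nonempty := hne _ le_rfl
  have hmend : 1 ≤ (aliveSet Opt OPT (Fs (n-k))).card := by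
    obtain ⟨h, hh⟩ := hEndne
    obtain ⟨o, hoOpt, hod⟩ := hcover h
    refine Finset.card_pos.mpr ⟨o, ?_⟩
    rw [mem_aliveSet]
    exact ⟨hoOpt, h, hh, by rw [dist_comm]; exact hod⟩
  have hcost_end : cost (Fs (n-k)) ≤
      2 * OPT * k - 2 * OPT * ((aliveSet Opt OPT (Fs (n-k))).card : ℝ) + 2 * OPT := by
    apply cost_le_of_forall hEndne
    intro y
    obtain ⟨o, ho, hd⟩ := key (n-k) le_rfl y
    obtain ⟨hoOpt, h, hhF, hhd⟩ := mem_aliveSet.mp ho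
    refine ⟨h, hhF, ?_⟩
    calc dist y h ≤ dist y o + dist o h := dist_triangle _ _ _
      _ ≤ (2 * OPT * k - 2 * OPT * ((aliveSet Opt OPT (Fs (n-k))).card : ℝ) + OPT) + OPT :=
        add_le_add hd hhd
      _ = 2 * OPT * k - 2 * OPT * ((aliveSet Opt OPT (Fs (n-k))).card : ℝ) + 2 * OPT := by ring
  have hm1 : (1 : ℝ) ≤ ((aliveSet Opt OPT (Fs (n-k))).card : ℝ) := by exact_mod_cast hmend
  calc cost (Fs (n-k)) ≤
      2 * OPT * k - 2 * OPT * ((aliveSet Opt OPT (Fs (n-k))).card : ℝ) + 2 * OPT := hcost_end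
    _ ≤ 2 * k * OPT := by nlinarith
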